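/- Let μ > 0, d ∈ ℝ and ω̃ ∈ ℝ, and let α > 0 satisfy α·(1 − α·μ·d)² = μ and α·μ·d ≠ 1. Define A := μ·d/(1 − α·μ·d). Then for every u₀ ∈ ℝ, setting γ := (1 + α·A)·u₀, one has α·A²·u₀² + A·u₀² + ω̃²·α·u₀² = μ·(d + ω̃²)·γ². (With d = ω̃_b² − ω̃² this reads: the boundary contribution to the Hamiltonian equals μ·ω̃_b²·γ², which is nonnegative; this yields positivity of the Hamiltonian restricted to the constraint submanifold.) -/

import Mathlib

/-- The boundary contribution to the Hamiltonian on the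
constraint submanifold equals μ(d + ω̃²)γ², where γ = (1 + αA)u₀. -/
theorem boundary_hamiltonian_contribution
    (μ d ωt α : ℝ) (hμ : 0 < μ) (hα : 0 < α)
    (hcube : α * (1 - α*μ*d)^2 = μ) (hne : α*μ*d ≠ 1)
    (A : ℝ) (hA : A = μ*d / (1 - α*μ*d)) :
    ∀ u0 : ℝ, α * A^2 * u0^2 + A * u0^2 + ωt^2 * α * u0^2
      = μ * (d + ωt^2) * ((1 + α*A) * u0)^2 := by
  intro u0
  have hs : (1 - α*μ*d) ≠ 0 := sub_ne_zero.mpr (Ne.symm hne)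
  have hAs : A * (1 - α*μ*d) = μ*d := by
    rw [hA]; exact div_mul_cancel₀ _ hs
  have h4 : (1 - α*μ*d) * (1 + α*A) = 1 := by
    rw [hA]; field_simp; ring
  have h3 : μ * (1 + α*A)^2 = α := by
    linear_combination (-(1 + α*A)^2) * hcube
      + (α * ((1 - α*μ*d) * (1 + α*A) + 1)) * h4
  have h5 : A * (1 + α*A) = μ*d * (1 + α*A)^2 := by
    linear_combination (1 + α*A)^2 * hAs + (-(A * (1 + α*A))) * h4
  linear_combination u0^2 * h5 - ωt^2 * u0^2 * h3
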